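/- Let k be an algebraically closed field of characteristic 0 and let A be a finitely generated commutative k-algebra which is an integral domain and a smooth k-algebra (the coordinate ring of a smooth irreducible affine variety X). Let M be a k-subspace of A invariant under all derivations: η(f) ∈ M for every η ∈ Der_k(A) and f ∈ M. Then M = 0, or M = k·1 (the constant functions), or M = A. In particular, as a module over the Lie algebra Der_k(A) of polynomial vector fields, A has a unique proper non-zero submodule, the 1-dimensional space of constant functions. -/

import Mathlib

open MvPolynomial Finsupp

section JLemmas

variable {k : Type*} [Field k] {ι : Type*}

noncomputable abbrev Jid (k : Type*) [Field k] (ι : Type*) : Ideal (MvPolynomial ι k) :=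
  Ideal.span (Set.range (X : ι → MvPolynomial ι k))

lemma deg_add (d e : ι →₀ ℕ) :
    (d + e).sum (fun _ n => n) = d.sum (fun _ n => n) + e.sum (fun _ n => n) :=
  Finsupp.sum_add_index' (fun _ => rfl) (fun _ _ _ => rfl)

lemma deg_eq_zero_iff (d : ι →₀ ℕ) : d.sum (fun _ n => n) = 0 ↔ d = 0 := by
  classical
  constructor
  · intro h
    ext a
    by_contra ha
    have hm : a ∈ d.support := Finsupp.mem_support_iff.mpr (by simpa using ha)
    have := Finset.sum_eq_zero_iff.mp h a hm
    exact ha (by simpa using this)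
  · rintro rfl; simp

lemma monomial_mem_Jpow {i : ℕ} (d : ι →₀ ℕ) (c : k) (h : i ≤ d.sum fun _ n => n) :
    monomial d c ∈ (Jid k ι) ^ i := by
  classical
  induction i generalizing d with
  | zero => simp
  | succ i ih =>
    have hd : d ≠ 0 := by
      intro h0; rw [h0] at h; simp at h
    obtain ⟨j, hj⟩ : ∃ j, d j ≠ 0 := by
      by_contra hall
      push_neg at hall
      exact hd (Finsupp.ext fun a => by simpa using hall a)
    set e := d - Finsupp.single j 1 with he
    have hde : d = e + Finsupp.single j 1 := by
      ext a
      by_cases haj : a = j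
      · subst haj
        simp [he, Finsupp.single_apply]
        omega
      · simp only [he, Finsupp.coe_tsub, Pi.sub_apply, Finsupp.add_apply, Finsupp.single_apply, if_neg (show ¬ j = a from fun h => haj h.symm)]; omega
    have hdeg : i ≤ e.sum fun _ n => n := by
      have := deg_add e (Finsupp.single j 1)
      rw [← hde] at this
      have hs : (Finsupp.single j 1).sum (fun _ n => n) = 1 := by simp
      omega
    have : monomial d c = X j * monomial e c := by
      rw [hde, X, monomial_mul, one_mul, add_comm]
    rw [this, pow_succ']
    exact Ideal.mul_mem_mul (Ideal.subset_span ⟨j, rfl⟩) (ih e hdeg)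

lemma mem_Jpow_of_deg {i : ℕ} (F : MvPolynomial ι k)
    (h : ∀ d ∈ F.support, i ≤ d.sum fun _ n => n) : F ∈ (Jid k ι) ^ i := by
  classical
  rw [F.as_sum]
  exact Ideal.sum_mem _ fun d hd => monomial_mem_Jpow d _ (h d hd)

lemma deg_of_mem_Jpow {i : ℕ} {F : MvPolynomial ι k} (h : F ∈ (Jid k ι) ^ i) :
    ∀ d ∈ F.support, i ≤ d.sum fun _ n => n := by
  classical
  induction i generalizing F with
  | zero => intro d _; exact Nat.zero_le _
  | succ i ih =>
    rw [pow_succ] at h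
    refine Submodule.mul_induction_on h ?_ ?_
    · intro G hG H hH d hd
      have hsupp := MvPolynomial.support_mul G H hd
      rw [Finset.mem_add] at hsupp
      obtain ⟨d1, hd1, d2, hd2, rfl⟩ := hsupp
      have h1 : i ≤ d1.sum fun _ n => n := ih hG d1 hd1
      have h2 : 1 ≤ d2.sum fun _ n => n := by
        -- H ∈ J: constant coeff zero
        have hc : constantCoeff H = 0 := by
          have : Jid k ι ≤ RingHom.ker (constantCoeff : MvPolynomial ι k →+* k) := by
            rw [Ideal.span_le]
            rintro _ ⟨j, rfl⟩
            simp [RingHom.mem_ker]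
          exact this hH
        have hne : d2 ≠ 0 := by
          rintro rfl
          rw [MvPolynomial.mem_support_iff] at hd2
          exact hd2 (by rw [← MvPolynomial.constantCoeff_eq] at *; exact hc)
        have := (deg_eq_zero_iff d2).not.mpr hne
        omega
      rw [deg_add]; omega
    · intro x y hx hy d hd
      have := MvPolynomial.support_add hd
      rw [Finset.mem_union] at this
      rcases this with h' | h'
      exacts [hx d h', hy d h']

lemma sub_single_add {d : ι →₀ ℕ} {j : ι} (hj : d j ≠ 0) :
    (d - Finsupp.single j 1) + Finsupp.single j 1 = d := by
  ext a
  classical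
  by_cases haj : a = j
  · subst haj
    simp [Finsupp.single_apply]
    omega
  · simp only [Finsupp.add_apply, Finsupp.coe_tsub, Pi.sub_apply, Finsupp.single_apply,
      if_neg (show ¬ j = a from fun h => haj h.symm)]
    omega

lemma deg_sub_single {d : ι →₀ ℕ} {j : ι} (hj : d j ≠ 0) :
    ((d - Finsupp.single j 1).sum fun _ n => n) + 1 = d.sum fun _ n => n := by
  classical
  have h := deg_add (d - Finsupp.single j 1) (Finsupp.single j 1)
  rw [sub_single_add hj] at h
  have hs : ((Finsupp.single j 1 : ι →₀ ℕ).sum fun _ n => n) = 1 := by simp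
  omega

lemma pderiv_as_sum [DecidableEq ι] (j : ι) (F : MvPolynomial ι k) :
    pderiv j F = ∑ d ∈ F.support, monomial (d - Finsupp.single j 1) (coeff d F * d j) := by
  conv_lhs => rw [F.as_sum]
  rw [map_sum]
  refine Finset.sum_congr rfl fun d _ => ?_
  rw [pderiv_monomial]

lemma pderiv_mem_Jpow {i : ℕ} {F : MvPolynomial ι k} (h : F ∈ (Jid k ι) ^ (i + 1)) (j : ι) :
    pderiv j F ∈ (Jid k ι) ^ i := by
  classical
  refine mem_Jpow_of_deg _ fun e he => ?_
  rw [pderiv_as_sum] at he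
  have := MvPolynomial.support_sum he
  rw [Finset.mem_biUnion] at this
  obtain ⟨d, hd, hed⟩ := this
  have hsub := MvPolynomial.support_monomial_subset hed
  rw [Finset.mem_singleton] at hsub
  subst hsub
  have hdj : d j ≠ 0 := by
    intro h0
    rw [MvPolynomial.mem_support_iff] at hed
    rw [MvPolynomial.coeff_monomial] at hed
    simp [h0] at hed
  have hdeg := deg_of_mem_Jpow h d hd
  have := deg_sub_single (d := d) (j := j) hdj
  omega

lemma euler_contradiction [CharZero k] {n : ℕ} (hn : 1 ≤ n) {F : MvPolynomial ι k}
    (hF : F ∈ (Jid k ι) ^ n) (hF' : F ∉ (Jid k ι) ^ (n + 1))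
    (hpd : ∀ j : ι, pderiv j F ∈ (Jid k ι) ^ n) : False := by
  classical
  -- find monomial of degree exactly n
  obtain ⟨d, hd, hdeg⟩ : ∃ d ∈ F.support, ¬ (n + 1 ≤ d.sum fun _ n => n) := by
    by_contra hall
    push_neg at hall
    exact hF' (mem_Jpow_of_deg F hall)
  have hdn : (d.sum fun _ n => n) = n := by
    have := deg_of_mem_Jpow hF d hd
    omega
  have hd0 : d ≠ 0 := by
    intro h0
    rw [h0] at hdn
    simp at hdn
    omega
  obtain ⟨j, hj⟩ : ∃ j, d j ≠ 0 := by
    by_contra hall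
    push_neg at hall
    exact hd0 (Finsupp.ext fun a => by simpa using hall a)
  -- coefficient of d - e_j in pderiv j F is nonzero
  set e := d - Finsupp.single j 1 with hedef
  have hcoeff : coeff e (pderiv j F) = coeff d F * d j := by
    rw [pderiv_as_sum]
    rw [MvPolynomial.coeff_sum]
    rw [Finset.sum_eq_single d]
    · rw [MvPolynomial.coeff_monomial, if_pos rfl]
    · intro d' hd' hne
      rw [MvPolynomial.coeff_monomial]
      by_cases hd'j : d' j = 0
      · simp [hd'j]
      · rw [if_neg]
        intro heq
        apply hne
        rw [← sub_single_add (d := d') (j := j) hd'j, heq, hedef, sub_single_add hj]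
    · intro hd'
      exact absurd hd hd'
  have hne : coeff e (pderiv j F) ≠ 0 := by
    rw [hcoeff]
    have h1 : coeff d F ≠ 0 := MvPolynomial.mem_support_iff.mp hd
    have h2 : (d j : k) ≠ 0 := Nat.cast_ne_zero.mpr hj
    exact mul_ne_zero h1 h2
  have hmem : e ∈ (pderiv j F).support := MvPolynomial.mem_support_iff.mpr hne
  have := deg_of_mem_Jpow (hpd j) e hmem
  have := deg_sub_single (d := d) (j := j) hj
  rw [← hedef] at this
  omega

end JLemmas

section ProjSep

universe u

lemma proj_sep {R : Type*} [CommRing R] {P : Type*} [AddCommGroup P] [Module R P]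
    [Module.Projective R P] (I : Ideal R) (z : P)
    (h : ∀ φ : P →ₗ[R] R, φ z ∈ I) : z ∈ I • (⊤ : Submodule R P) := by
  obtain ⟨s, hs⟩ := Module.projective_def.mp ‹Module.Projective R P›
  have hz : z = (s z).sum fun p c => c • p := by
    conv_lhs => rw [← hs z]
    rfl
  rw [hz]
  refine Submodule.sum_mem _ fun p hp => ?_
  refine Submodule.smul_mem_smul ?_ trivial
  exact h ((Finsupp.lapply p).comp s)

variable (k : Type u) [Field k] (A : Type u) [CommRing A] [Algebra k A]

open KaehlerDifferential in
lemma proj_Omega [Algebra.FormallySmooth k A] : Module.Projective A (Ω[A⁄k]) := by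
  letI : Algebra (MvPolynomial A k) A := (MvPolynomial.aeval _root_.id).toAlgebra
  haveI : IsScalarTower k (MvPolynomial A k) A :=
    IsScalarTower.of_algebraMap_eq fun c => ((MvPolynomial.aeval (R := k) (_root_.id : A → A)).commutes c).symm
  have hsurj : Function.Surjective (algebraMap (MvPolynomial A k) A) :=
    fun x => ⟨MvPolynomial.X x, MvPolynomial.aeval_X _ _⟩
  exact Algebra.FormallySmooth.projective_kaehlerDifferential

lemma deriv_mem [Algebra.FormallySmooth k A] (I : Ideal A) (x : A)
    (h : ∀ η : Derivation k A A, η x ∈ I)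
    (N : Type u) [AddCommGroup N] [Module A N] [Module k N] [IsScalarTower k A N]
    (δ : Derivation k A N) : δ x ∈ I • (⊤ : Submodule A N) := by
  haveI := proj_Omega k A
  have hD : (KaehlerDifferential.D k A) x ∈ I • (⊤ : Submodule A (Ω[A⁄k])) := by
    refine proj_sep I _ fun φ => ?_
    have := h (φ.compDer (KaehlerDifferential.D k A))
    simpa using this
  have hδ : δ x = δ.liftKaehlerDifferential ((KaehlerDifferential.D k A) x) := by
    rw [Derivation.liftKaehlerDifferential_comp_D]
  rw [hδ]
  have := Submodule.map_smul'' I (⊤ : Submodule A (Ω[A⁄k])) δ.liftKaehlerDifferential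
  have hmem := Submodule.mem_map_of_mem (f := δ.liftKaehlerDifferential) hD
  rw [this] at hmem
  exact (smul_mono_right _ le_top :
    I • Submodule.map δ.liftKaehlerDifferential ⊤ ≤ I • ⊤) hmem

end ProjSep

section OrderLemma

universe u

variable {k : Type u} [Field k] [CharZero k] {A : Type u} [CommRing A] [Algebra k A]
  [Algebra.FormallySmooth k A]

set_option maxHeartbeats 2000000 in
set_option synthInstance.maxHeartbeats 1000000 in
theorem order_lemma (m : Ideal A) (hm : m.IsMaximal)
    (hres : ∀ a : A, ∃ c : k, a - algebraMap k A c ∈ m)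
    {n : ℕ} (hn : 1 ≤ n) {x : A} (hx : x ∈ m ^ n)
    (hdx : ∀ η : Derivation k A A, η x ∈ m ^ n) : x ∈ m ^ (n + 1) := by
  classical
  by_contra hx1
  set ι := {y : A // y ∈ m} with hι
  set P := MvPolynomial ι k with hP
  set J : Ideal P := Jid k ι with hJ
  set N := n + 2 with hN
  set ev : P →ₐ[k] A := MvPolynomial.aeval Subtype.val with hev
  have hevJ : Ideal.map (ev : P →+* A) J ≤ m := by
    rw [hJ, Jid, Ideal.map_span, Ideal.span_le]
    rintro _ ⟨_, ⟨t, rfl⟩, rfl⟩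
    have hh : (ev : P →+* A) (X t) = ev (X t) := rfl
    rw [hh, hev, MvPolynomial.aeval_X]
    exact t.2
  have hevJpow : ∀ (i : ℕ) (F : P), F ∈ J ^ i → ev F ∈ m ^ i := by
    intro i F hF
    have := Ideal.pow_right_mono hevJ i (by rw [← Ideal.map_pow]; exact Ideal.mem_map_of_mem _ hF)
    exact this
  set q : A →ₐ[k] A ⧸ m ^ N := Ideal.Quotient.mkₐ k (m ^ N) with hq
  set p0 : P →ₐ[k] A ⧸ m ^ N := q.comp ev with hp0
  have hp0z : ∀ F ∈ J ^ N, p0 F = 0 := by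
    intro F hF
    have : ev F ∈ m ^ N := hevJpow N F hF
    simpa [hp0, hq] using Ideal.Quotient.eq_zero_iff_mem.mpr this
  set p : (P ⧸ J ^ N) →ₐ[k] A ⧸ m ^ N := Ideal.Quotient.liftₐ (J ^ N) p0 hp0z with hp
  have hpmk : ∀ F : P, p (Ideal.Quotient.mk (J ^ N) F) = Ideal.Quotient.mk (m ^ N) (ev F) := by
    intro F; rfl
  -- approximation
  have approx : ∀ (j : ℕ) (z : A), z ∈ m ^ j → ∃ F : P, z - ev F ∈ m ^ (j + 1) := by
    intro j
    induction j with
    | zero =>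
      intro z _
      obtain ⟨c, hc⟩ := hres z
      refine ⟨MvPolynomial.C c, ?_⟩
      show z - (aeval Subtype.val) (C c) ∈ m ^ (0+1)
      rw [MvPolynomial.aeval_C, pow_one]
      exact hc
    | succ j ih =>
      intro z hz
      rw [pow_succ] at hz
      refine Submodule.mul_induction_on hz ?_ ?_
      · intro a ha y hy
        obtain ⟨F, hF⟩ := ih a ha
        refine ⟨F * MvPolynomial.X ⟨y, hy⟩, ?_⟩
        have heq : a * y - ev (F * MvPolynomial.X ⟨y, hy⟩) = (a - ev F) * y := by
          rw [map_mul]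
          have : ev (MvPolynomial.X (⟨y, hy⟩ : ι)) = y := by rw [hev, MvPolynomial.aeval_X]
          rw [this]; ring
        rw [heq, pow_succ]
        exact Ideal.mul_mem_mul hF hy
      · intro z1 z2 h1 h2
        obtain ⟨F1, hF1⟩ := h1
        obtain ⟨F2, hF2⟩ := h2
        refine ⟨F1 + F2, ?_⟩
        have : z1 + z2 - ev (F1 + F2) = (z1 - ev F1) + (z2 - ev F2) := by
          rw [map_add]; ring
        rw [this]
        exact Ideal.add_mem _ hF1 hF2
  have approx' : ∀ (j : ℕ) (z : A), ∃ F : P, z - ev F ∈ m ^ j := by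
    intro j
    induction j with
    | zero => intro z; exact ⟨0, by simp⟩
    | succ j ih =>
      intro z
      obtain ⟨F, hF⟩ := ih z
      obtain ⟨G, hG⟩ := approx j _ hF
      refine ⟨F + G, ?_⟩
      have : z - ev (F + G) = z - ev F - ev G := by rw [map_add]; ring
      rw [this]
      exact hG
  have hpsurj : Function.Surjective p := by
    intro w
    obtain ⟨z, rfl⟩ := Ideal.Quotient.mk_surjective w
    obtain ⟨F, hF⟩ := approx' N z
    refine ⟨Ideal.Quotient.mk _ F, ?_⟩
    rw [hpmk, Ideal.Quotient.mk_eq_mk_iff_sub_mem]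
    rw [show ev F - z = -(z - ev F) by ring]
    exact neg_mem hF
  -- membership lemma for Jbar
  set Jb : Ideal (P ⧸ J ^ N) := Ideal.map (Ideal.Quotient.mk (J ^ N)) J with hJb
  set mb : Ideal (A ⧸ m ^ N) := Ideal.map (Ideal.Quotient.mk (m ^ N)) m with hmb
  have hcm : ∀ c : k, algebraMap k A c ∈ m → c = 0 := by
    intro c hc
    by_contra hc0
    have hu : IsUnit (algebraMap k A c) := (isUnit_iff_ne_zero.mpr hc0).map (algebraMap k A)
    exact hm.ne_top (m.eq_top_of_isUnit_mem hc hu)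
  have hcomap : ∀ i : ℕ, i ≤ N → ∀ z : A,
      Ideal.Quotient.mk (m ^ N) z ∈ Ideal.map (Ideal.Quotient.mk (m ^ N)) (m ^ i) → z ∈ m ^ i := by
    intro i hi z hz
    have h4 := Ideal.comap_map_of_surjective (Ideal.Quotient.mk (m ^ N))
      Ideal.Quotient.mk_surjective (m ^ i)
    have hker0 : Ideal.comap (Ideal.Quotient.mk (m ^ N)) ⊥ = m ^ N := by
      rw [← RingHom.ker_eq_comap_bot]
      exact Ideal.mk_ker
    rw [hker0] at h4
    have h5 : z ∈ m ^ i ⊔ m ^ N := by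
      rw [← h4]
      exact Ideal.mem_comap.mpr hz
    have h6 : m ^ N ≤ m ^ i := Ideal.pow_le_pow_right hi
    rwa [sup_eq_left.mpr h6] at h5
  have hBJ : ∀ β : P ⧸ J ^ N, p β ∈ mb → β ∈ Jb := by
    intro β hβ
    obtain ⟨F, rfl⟩ := Ideal.Quotient.mk_surjective β
    set c := MvPolynomial.constantCoeff F with hc
    have hFc : F - MvPolynomial.C c ∈ J := by
      rw [hJ, ← pow_one (Jid k ι)]
      refine mem_Jpow_of_deg _ fun d hd => ?_
      rcases Nat.eq_zero_or_pos (d.sum fun _ n => n) with h | h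
      case inr h => exact h
      case inl h =>
        exfalso
        have hd0 : d = 0 := (deg_eq_zero_iff d).mp h
        rw [MvPolynomial.mem_support_iff, hd0] at hd
        apply hd
        rw [MvPolynomial.coeff_sub, ← MvPolynomial.constantCoeff_eq,
          MvPolynomial.constantCoeff_C, hc, sub_self]
    have hpFc : p (Ideal.Quotient.mk (J ^ N) (F - MvPolynomial.C c)) ∈ mb := by
      rw [hpmk]
      exact Ideal.mem_map_of_mem _ (hevJ (Ideal.mem_map_of_mem _ hFc))
    have hsplit : Ideal.Quotient.mk (J ^ N) (MvPolynomial.C c)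
        = Ideal.Quotient.mk (J ^ N) F - Ideal.Quotient.mk (J ^ N) (F - MvPolynomial.C c) := by
      rw [← map_sub]
      congr 1
      ring
    have halg : p (Ideal.Quotient.mk (J ^ N) (MvPolynomial.C c)) = algebraMap k (A ⧸ m ^ N) c := by
      rw [hpmk]
      have h1 : ev (MvPolynomial.C c) = algebraMap k A c := by rw [hev, MvPolynomial.aeval_C]
      rw [h1]
      exact (Ideal.Quotient.mkₐ k (m ^ N)).commutes c
    have hcmem : algebraMap k (A ⧸ m ^ N) c ∈ mb := by
      rw [← halg, hsplit, map_sub]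
      exact Submodule.sub_mem _ hβ hpFc
    have hc0 : c = 0 := by
      apply hcm
      have : Ideal.Quotient.mk (m ^ N) (algebraMap k A c) = algebraMap k (A ⧸ m ^ N) c :=
        (Ideal.Quotient.mkₐ k (m ^ N)).commutes c
      have h7 : algebraMap k A c ∈ m ^ 1 := by
        apply hcomap 1 (by omega)
        rw [this, pow_one]
        exact hcmem
      rwa [pow_one] at h7
    have : F ∈ J := by
      have := hFc
      rw [hc0] at this
      simpa using this
    exact Ideal.mem_map_of_mem _ this
  -- nilpotency of the kernel
  have hJbN : Jb ^ N = ⊥ := by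
    rw [hJb, ← Ideal.map_pow, Ideal.map_quotient_self]
  have hker : RingHom.ker (p : (P ⧸ J ^ N) →+* A ⧸ m ^ N) ≤ Jb := by
    intro β hβ
    refine hBJ β ?_
    rw [RingHom.mem_ker] at hβ
    have : p β = 0 := hβ
    rw [this]
    exact Submodule.zero_mem _
  have hnilp : IsNilpotent (RingHom.ker (p : (P ⧸ J ^ N) →+* A ⧸ m ^ N)) := by
    refine ⟨N, ?_⟩
    rw [Submodule.zero_eq_bot, eq_bot_iff, ← hJbN]
    exact Ideal.pow_right_mono hker N
  -- the lift
  set σ : A →ₐ[k] P ⧸ J ^ N := Algebra.FormallySmooth.liftOfSurjective q p hpsurj hnilp with hσdef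
  have hσ : ∀ a, p (σ a) = q a := fun a =>
    Algebra.FormallySmooth.liftOfSurjective_apply q p hpsurj hnilp a
  have hσm : ∀ a ∈ m, σ a ∈ Jb := by
    intro a ha
    apply hBJ
    rw [hσ]
    exact Ideal.mem_map_of_mem _ ha
  have hσpow : ∀ (i : ℕ) (a : A), a ∈ m ^ i → σ a ∈ Jb ^ i := by
    intro i a ha
    have h1 : Ideal.map (σ : A →+* P ⧸ J ^ N) (m ^ i) ≤ Jb ^ i := by
      rw [Ideal.map_pow]
      exact Ideal.pow_right_mono (Ideal.map_le_iff_le_comap.mpr fun b hb => Ideal.mem_comap.mpr (hσm b hb)) i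
    exact h1 (Ideal.mem_map_of_mem _ ha)
  -- sigma x is not in Jb^(n+1)
  have hmapp : Ideal.map ((p : (P ⧸ J ^ N) →+* A ⧸ m ^ N).comp (Ideal.Quotient.mk (J ^ N))) J
      ≤ mb := by
    apply Ideal.map_le_iff_le_comap.mpr
    refine le_trans (le_of_eq hJ) (Ideal.span_le.mpr ?_)
    rintro _ ⟨t, rfl⟩
    refine Ideal.mem_comap.mpr ?_
    have h1 : ((p : (P ⧸ J ^ N) →+* A ⧸ m ^ N).comp (Ideal.Quotient.mk (J ^ N))) (X t)
        = p (Ideal.Quotient.mk (J ^ N) (X t)) := rfl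
    rw [h1, hpmk]
    have h2 : ev (X t) = (t : A) := by rw [hev, MvPolynomial.aeval_X]
    rw [h2]
    exact Ideal.mem_map_of_mem _ t.2
  have hσx1 : σ x ∉ Jb ^ (n + 1) := by
    intro hσx
    apply hx1
    apply hcomap (n + 1) (by omega)
    have h1 : p (σ x) ∈ Ideal.map (p : (P ⧸ J ^ N) →+* A ⧸ m ^ N) (Jb ^ (n + 1)) :=
      Ideal.mem_map_of_mem _ hσx
    rw [Ideal.map_pow, hJb, Ideal.map_map] at h1
    have h2 := Ideal.pow_right_mono hmapp (n + 1) h1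
    rw [hmb, ← Ideal.map_pow] at h2
    have h3 : q x ∈ Ideal.map (Ideal.Quotient.mk (m ^ N)) (m ^ (n + 1)) := hσ x ▸ h2
    exact h3
  have hσxn : σ x ∈ Jb ^ n := hσpow n x hx
  -- lift to F
  have hJbn : Jb ^ n = Ideal.map (Ideal.Quotient.mk (J ^ N)) (J ^ n) := by
    rw [hJb, Ideal.map_pow]
  obtain ⟨F, hFJ, hFx⟩ := Ideal.mem_map_iff_of_surjective _ Ideal.Quotient.mk_surjective
    |>.mp (hJbn ▸ hσxn)
  have hFJ1 : F ∉ J ^ (n + 1) := by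
    intro hF1
    apply hσx1
    have : Jb ^ (n + 1) = Ideal.map (Ideal.Quotient.mk (J ^ N)) (J ^ (n + 1)) := by
      rw [hJb, Ideal.map_pow]
    rw [this, ← hFx]
    exact Ideal.mem_map_of_mem _ hF1
  -- the smaller truncation
  have hJle : J ^ N ≤ J ^ (n + 1) := Ideal.pow_le_pow_right (by omega)
  set τ : (P ⧸ J ^ N) →ₐ[k] P ⧸ J ^ (n + 1) :=
    Ideal.Quotient.liftₐ (J ^ N) (Ideal.Quotient.mkₐ k (J ^ (n + 1)))
      (fun G hG => by
        have : G ∈ J ^ (n + 1) := hJle hG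
        simpa using Ideal.Quotient.eq_zero_iff_mem.mpr this) with hτdef
  have hτ : ∀ G : P, τ (Ideal.Quotient.mk (J ^ N) G) = Ideal.Quotient.mk (J ^ (n + 1)) G :=
    fun G => rfl
  set σ'' : A →ₐ[k] P ⧸ J ^ (n + 1) := τ.comp σ with hσ''def
  letI : Algebra A (P ⧸ J ^ (n + 1)) := σ''.toRingHom.toAlgebra
  haveI : IsScalarTower k A (P ⧸ J ^ (n + 1)) :=
    IsScalarTower.of_algebraMap_eq' (σ''.comp_algebraMap).symm
  have hsmul'' : ∀ (a : A) (z : P ⧸ J ^ (n + 1)), a • z = σ'' a * z := fun a z =>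
    Algebra.smul_def a z
  -- each partial derivative of F lies in J^n
  have hpd : ∀ j : ι, MvPolynomial.pderiv j F ∈ J ^ n := by
    intro j
    -- build the k-linear map on the quotient
    set pd : P →ₗ[k] P ⧸ J ^ (n + 1) :=
      (Ideal.Quotient.mkₐ k (J ^ (n + 1))).toLinearMap.comp
        (MvPolynomial.pderiv j).toLinearMap with hpddef
    have hpdker : (J ^ N).restrictScalars k ≤ LinearMap.ker pd := by
      intro G hG
      have hG' : G ∈ J ^ N := hG
      have h1 : MvPolynomial.pderiv j G ∈ J ^ (n + 1) := by
        have : G ∈ J ^ ((n + 1) + 1) := by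
          have hNe : N = (n + 1) + 1 := by omega
          rwa [hNe] at hG'
        exact pderiv_mem_Jpow this j
      simp only [LinearMap.mem_ker, hpddef, LinearMap.coe_comp, Function.comp_apply,
        AlgHom.toLinearMap_apply, Derivation.coeFn_coe]
      show Ideal.Quotient.mkₐ k (J ^ (n + 1)) (MvPolynomial.pderiv j G) = 0
      simpa using Ideal.Quotient.eq_zero_iff_mem.mpr h1
    set Df : (P ⧸ J ^ N) →ₗ[k] P ⧸ J ^ (n + 1) :=
      (Submodule.liftQ ((J ^ N).restrictScalars k) pd hpdker).comp
        (Submodule.Quotient.restrictScalarsEquiv k (J ^ N : Ideal P)).symm.toLinearMap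
      with hDfdef
    have hDf : ∀ G : P, Df (Ideal.Quotient.mk (J ^ N) G)
        = Ideal.Quotient.mk (J ^ (n + 1)) (MvPolynomial.pderiv j G) := fun G => rfl
    -- Leibniz rule on the quotient
    have hLeib : ∀ β γ : P ⧸ J ^ N, Df (β * γ) = τ β * Df γ + τ γ * Df β := by
      intro β γ
      obtain ⟨G, rfl⟩ := Ideal.Quotient.mk_surjective β
      obtain ⟨H, rfl⟩ := Ideal.Quotient.mk_surjective γ
      rw [← map_mul, hDf, hDf, hDf, hτ, hτ]
      rw [(MvPolynomial.pderiv j).leibniz G H]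
      simp only [smul_eq_mul, map_add, map_mul]
    -- the derivation
    set δ : Derivation k A (P ⧸ J ^ (n + 1)) :=
      Derivation.mk' (Df.comp σ.toLinearMap)
        (by
          intro a b
          have h1 : (Df.comp σ.toLinearMap) (a * b) = Df (σ a * σ b) := by
            simp [map_mul]
          rw [h1, hLeib]
          rw [hsmul'' a, hsmul'' b]
          simp only [LinearMap.coe_comp, Function.comp_apply, AlgHom.toLinearMap_apply]
          rfl) with hδdef
    have hδx : δ x ∈ (m ^ n) • (⊤ : Submodule A (P ⧸ J ^ (n + 1))) :=
      deriv_mem k A (m ^ n) x hdx _ δ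
    -- m^n • ⊤ lands in (map mk'' J)^n
    set Jb'' : Ideal (P ⧸ J ^ (n + 1)) := Ideal.map (Ideal.Quotient.mk (J ^ (n + 1))) J
      with hJb''
    have hσ''pow : ∀ a ∈ m ^ n, σ'' a ∈ Jb'' ^ n := by
      intro a ha
      have h1 := hσpow n a ha
      rw [hJbn] at h1
      obtain ⟨G, hG, hGa⟩ := Ideal.mem_map_iff_of_surjective _
        Ideal.Quotient.mk_surjective |>.mp h1
      have h2 : σ'' a = Ideal.Quotient.mk (J ^ (n + 1)) G := by
        rw [hσ''def]
        show τ (σ a) = _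
        rw [← hGa, hτ]
      rw [h2, hJb'', ← Ideal.map_pow]
      exact Ideal.mem_map_of_mem _ hG
    have hmem'' : δ x ∈ Jb'' ^ n := by
      refine Submodule.smul_induction_on hδx ?_ ?_
      · intro a ha z _
        rw [hsmul'' a z]
        exact Ideal.mul_mem_right _ _ (hσ''pow a ha)
      · intro y z hy hz
        exact Ideal.add_mem _ hy hz
    have hδxval : δ x = Ideal.Quotient.mk (J ^ (n + 1)) (MvPolynomial.pderiv j F) := by
      show Df (σ x) = _
      rw [← hFx, hDf]
    rw [hδxval, hJb'', ← Ideal.map_pow] at hmem''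
    obtain ⟨G, hG, hGe⟩ := Ideal.mem_map_iff_of_surjective _
      Ideal.Quotient.mk_surjective |>.mp hmem''
    have hsub : MvPolynomial.pderiv j F - G ∈ J ^ (n + 1) := by
      rw [← Ideal.Quotient.mk_eq_mk_iff_sub_mem]
      exact hGe.symm
    have : MvPolynomial.pderiv j F = G + (MvPolynomial.pderiv j F - G) := by ring
    rw [this]
    exact Ideal.add_mem _ hG (Ideal.pow_le_pow_right (by omega) hsub)
  exact euler_contradiction hn hFJ hFJ1 hpd

end OrderLemma

lemma exists_max_pow {A : Type*} [CommRing A] (m : Ideal A) {Q : ℕ → Prop}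
    (hmono : ∀ i j, i ≤ j → Q j → Q i) (h1 : Q 1) (hex : ∃ j, ¬ Q j) :
    ∃ n, 1 ≤ n ∧ Q n ∧ ¬ Q (n + 1) := by
  classical
  set j0 := Nat.find hex with hj0
  have hj0spec : ¬ Q j0 := Nat.find_spec hex
  have hj02 : 2 ≤ j0 := by
    by_contra h
    push_neg at h
    interval_cases j0 <;> [exact hj0spec (hmono 0 1 (by omega) h1); exact hj0spec h1]
  refine ⟨j0 - 1, by omega, ?_, ?_⟩
  · have := Nat.find_min hex (m := j0 - 1) (by omega)
    simpa using this
  · have : j0 - 1 + 1 = j0 := by omega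
    rw [this]
    exact hj0spec

section Main
universe u
variable (k : Type u) [Field k] [IsAlgClosed k] [CharZero k]
  (A : Type u) [CommRing A] [IsDomain A] [Algebra k A] [Algebra.FiniteType k A]
  [Algebra.Smooth k A]

lemma residue_lemma (m : Ideal A) (hm : m.IsMaximal) :
    ∀ a : A, ∃ c : k, a - algebraMap k A c ∈ m := by
  intro a
  haveI : Algebra.FiniteType k (A ⧸ m) :=
    Algebra.FiniteType.of_surjective (Ideal.Quotient.mkₐ k m)
      (Ideal.Quotient.mkₐ_surjective k m)
  haveI := hm
  letI : Field (A ⧸ m) := Ideal.Quotient.field m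
  haveI : Module.Finite k (A ⧸ m) := finite_of_finite_type_of_isJacobsonRing k (A ⧸ m)
  haveI : Algebra.IsIntegral k (A ⧸ m) := Algebra.IsIntegral.of_finite k (A ⧸ m)
  obtain ⟨c, hc⟩ := (IsAlgClosed.algebraMap_bijective_of_isIntegral
    (k := k) (K := A ⧸ m)).2 (Ideal.Quotient.mk m a)
  refine ⟨c, ?_⟩
  rw [← Ideal.Quotient.eq_zero_iff_mem, map_sub]
  have h2 : Ideal.Quotient.mk m (algebraMap k A c) = algebraMap k (A ⧸ m) c :=
    (Ideal.Quotient.mkₐ k m).commutes c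
  rw [h2, hc, sub_self]
end Main

/-- For the coordinate ring `A` of a smooth irreducible affine variety, the only subspaces of
`A` invariant under all polynomial vector fields are `0`, the constants `k·1`, and `A`:
as a module over `Der_k(A)`, `A` has a unique proper non-zero submodule, the constants. -/
theorem invariant_subspace_trichotomy.{u}
    (k : Type u) [Field k] [IsAlgClosed k] [CharZero k]
    (A : Type u) [CommRing A] [IsDomain A] [Algebra k A] [Algebra.FiniteType k A]
    [Algebra.Smooth k A]
    (M : Submodule k A) (hM : ∀ η : Derivation k A A, ∀ f ∈ M, η f ∈ M) :
    M = ⊥ ∨ M = Submodule.span k {1} ∨ M = ⊤ := by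
  haveI : IsNoetherianRing A := Algebra.FiniteType.isNoetherianRing k A
  by_cases hM1 : M ≤ Submodule.span k {1}
  · by_cases hMb : M = ⊥
    · exact Or.inl hMb
    · refine Or.inr (Or.inl (le_antisymm hM1 ?_))
      obtain ⟨g, hgM, hg0⟩ := Submodule.exists_mem_ne_zero_of_ne_bot hMb
      obtain ⟨c, hc⟩ := Submodule.mem_span_singleton.mp (hM1 hgM)
      have hc0 : c ≠ 0 := by
        rintro rfl
        rw [zero_smul] at hc
        exact hg0 hc.symm
      rw [Submodule.span_le, Set.singleton_subset_iff]
      have : (1 : A) = c⁻¹ • g := by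
        rw [← hc, smul_smul, inv_mul_cancel₀ hc0, one_smul]
      rw [this]
      exact Submodule.smul_mem _ _ hgM
  · obtain ⟨f₀, hf₀M, hf₀⟩ := SetLike.not_le_iff_exists.mp hM1
    refine Or.inr (Or.inr ?_)
    set G : Set A := {y | ∃ η : Derivation k A A, ∃ g ∈ M, y = η g} with hG
    set I : Ideal A := Ideal.span G with hI
    have hGM : ∀ y ∈ G, y ∈ M := by
      rintro y ⟨η, g, hg, rfl⟩
      exact hM η g hg
    have hGsmul : ∀ (a : A) (y : A), y ∈ G → a * y ∈ G := by
      rintro a y ⟨η, g, hg, rfl⟩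
      refine ⟨a • η, g, hg, ?_⟩
      rw [Derivation.smul_apply, smul_eq_mul]
    have hIM : ∀ x, x ∈ I → x ∈ M := by
      intro x hx
      have h1 : x ∈ Submodule.span k G := by
        refine Submodule.span_induction ?_ ?_ ?_ ?_ hx
        · intro y hy; exact Submodule.subset_span hy
        · exact Submodule.zero_mem _
        · intro y z _ _ hy hz; exact Submodule.add_mem _ hy hz
        · intro a y _ hy
          have hmap : Submodule.map (LinearMap.mulLeft k a) (Submodule.span k G)
              ≤ Submodule.span k G := by
            rw [Submodule.map_span, Submodule.span_le]
            rintro _ ⟨z, hz, rfl⟩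
            rw [LinearMap.mulLeft_apply]
            exact Submodule.subset_span (hGsmul a z hz)
          have : a • y = LinearMap.mulLeft k a y := by
            rw [LinearMap.mulLeft_apply, smul_eq_mul]
          rw [this]
          exact hmap (Submodule.mem_map_of_mem hy)
      exact Submodule.span_le.mpr hGM h1
    have hIdiff : ∀ (η : Derivation k A A) (x : A), x ∈ I → η x ∈ I := by
      intro η x hx
      refine Submodule.span_induction ?_ ?_ ?_ ?_ hx
      · intro y hy
        exact Ideal.subset_span ⟨η, y, hGM y hy, rfl⟩
      · rw [map_zero]; exact Submodule.zero_mem I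
      · intro y z _ _ hy hz; rw [map_add]; exact Ideal.add_mem _ hy hz
      · intro a y hymem hy
        rw [smul_eq_mul, Derivation.leibniz]
        refine Ideal.add_mem _ ?_ ?_
        · rw [smul_eq_mul]; exact Ideal.mul_mem_left _ _ hy
        · rw [smul_eq_mul]; exact Ideal.mul_mem_right _ _ hymem
    by_cases hIbot : I = ⊥
    · exfalso
      have hη0 : ∀ η : Derivation k A A, η f₀ = 0 := by
        intro η
        have h2 : η f₀ ∈ I := Ideal.subset_span ⟨η, f₀, hf₀M, rfl⟩
        rw [hIbot] at h2
        simpa using h2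
      obtain ⟨m, hm⟩ := Ideal.exists_maximal A
      have hres := residue_lemma k A m hm
      obtain ⟨c, hc⟩ := hres f₀
      set g := f₀ - algebraMap k A c with hg
      have hg0 : g ≠ 0 := by
        intro h0
        apply hf₀
        have h3 : f₀ = algebraMap k A c := by
          have := sub_eq_zero.mp h0
          exact this
        rw [h3, Algebra.algebraMap_eq_smul_one]
        exact Submodule.smul_mem _ _ (Submodule.mem_span_singleton_self 1)
      have hdg : ∀ η : Derivation k A A, η g = 0 := by
        intro η
        rw [hg, map_sub, hη0 η, Derivation.map_algebraMap, sub_zero]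
      have hKrull : ∃ j, g ∉ m ^ j := by
        by_contra hall
        push_neg at hall
        have h4 : g ∈ ⨅ i : ℕ, m ^ i := Submodule.mem_iInf _ |>.mpr hall
        rw [Ideal.iInf_pow_eq_bot_of_isDomain m hm.ne_top] at h4
        exact hg0 h4
      obtain ⟨n, hn1, hgn, hgn1⟩ := exists_max_pow m (Q := fun j => g ∈ m ^ j)
        (fun i j hij h => Ideal.pow_le_pow_right hij h) (by show g ∈ m ^ 1; rw [pow_one]; exact hc) hKrull
      exact hgn1 (order_lemma m hm hres hn1 hgn
        (fun η => by rw [hdg η]; exact Submodule.zero_mem _))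
    · have hItop : I = ⊤ := by
        by_contra hIt
        obtain ⟨m, hm, hIm⟩ := Ideal.exists_le_maximal I hIt
        have hres := residue_lemma k A m hm
        obtain ⟨a, haI, ha0⟩ := Submodule.exists_mem_ne_zero_of_ne_bot hIbot
        have hKrull : ∃ j, ¬ I ≤ m ^ j := by
          by_contra hall
          push_neg at hall
          have h4 : a ∈ ⨅ i : ℕ, m ^ i := Submodule.mem_iInf _ |>.mpr fun i => hall i haI
          rw [Ideal.iInf_pow_eq_bot_of_isDomain m hm.ne_top] at h4
          exact ha0 h4
        obtain ⟨n, hn1, hIn, hIn1⟩ := exists_max_pow m (Q := fun j => I ≤ m ^ j)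
          (fun i j hij h => le_trans h (Ideal.pow_le_pow_right hij))
          (by show I ≤ m ^ 1; rw [pow_one]; exact hIm) hKrull
        obtain ⟨x, hxI, hxm⟩ := SetLike.not_le_iff_exists.mp hIn1
        exact hxm (order_lemma m hm hres hn1 (hIn hxI) (fun η => hIn (hIdiff η x hxI)))
      rw [Submodule.eq_top_iff']
      intro a
      exact hIM a (hItop ▸ Submodule.mem_top)
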